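/- arXiv:1505.06905 — 4 statements merged into one kernel-verified Lean document; each statement's English description precedes it below -/
import Mathlib

section
/- For all real χ ≥ 1 and complex ω = a + ib with -1 ≤ a ≤ 0, the upper incomplete gamma function satisfies |Γ(ω+1, χ)| ≤ 2·e^{-χ}·χ^{a+1}. -/
/-- Upper incomplete gamma bound for `-1 ≤ Re ω ≤ 0`, `χ ≥ 1`:
`|Γ(ω+1, χ)| ≤ 2 e^{-χ} χ^{Re ω + 1}`, where
`Γ(s, χ) = ∫_χ^∞ e^{-t} t^{s-1} dt` (so `Γ(ω+1,χ) = ∫_χ^∞ e^{-t} t^ω dt`). -/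
theorem upper_incomplete_gamma_bound_neg (χ : ℝ) (hχ : 1 ≤ χ) (ω : ℂ)
    (h₁ : -1 ≤ ω.re) (h₂ : ω.re ≤ 0) :
    ‖∫ t in Set.Ioi χ, Complex.exp (-(t : ℂ)) * (t : ℂ) ^ ω‖ ≤
      2 * Real.exp (-χ) * χ ^ (ω.re + 1) := by
  have hχ0 : 0 < χ := lt_of_lt_of_le one_pos hχ
  have hg : MeasureTheory.IntegrableOn
      (fun t : ℝ => χ ^ ω.re * Real.exp (-t)) (Set.Ioi χ) := by
    have := (exp_neg_integrableOn_Ioi χ one_pos)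
    simpa [MeasureTheory.IntegrableOn] using this.const_mul (χ ^ ω.re)
  have hbound : ‖∫ t in Set.Ioi χ, Complex.exp (-(t : ℂ)) * (t : ℂ) ^ ω‖ ≤
      ∫ t in Set.Ioi χ, χ ^ ω.re * Real.exp (-t) := by
    refine MeasureTheory.norm_integral_le_of_norm_le hg ?_
    filter_upwards [MeasureTheory.ae_restrict_mem measurableSet_Ioi] with t ht
    have ht0 : 0 < t := lt_trans hχ0 ht
    rw [norm_mul,
      Complex.norm_exp,
      Complex.norm_cpow_eq_rpow_re_of_pos ht0]
    simp only [Complex.neg_re, Complex.ofReal_re]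
    rw [mul_comm]
    exact mul_le_mul_of_nonneg_right
      (Real.rpow_le_rpow_of_nonpos hχ0 (le_of_lt ht) h₂) (Real.exp_pos _).le
  have hint : (∫ t in Set.Ioi χ, χ ^ ω.re * Real.exp (-t)) =
      χ ^ ω.re * Real.exp (-χ) := by
    rw [MeasureTheory.integral_const_mul, integral_exp_neg_Ioi]
  refine hbound.trans ?_
  rw [hint]
  have h1 : χ ^ ω.re ≤ χ ^ (ω.re + 1) :=
    Real.rpow_le_rpow_of_exponent_le hχ (by linarith)
  have h2 : (0:ℝ) < Real.exp (-χ) := Real.exp_pos _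
  nlinarith [Real.rpow_pos_of_pos hχ0 ω.re]
end

section
/- For all real χ ≥ 1 and complex ω = a + ib with 0 ≤ a ≤ 1, the upper incomplete gamma function satisfies |Γ(ω+1, χ)| ≤ 2·e^{-χ}·χ^{a+1}. -/
open MeasureTheory Set

/-- Upper incomplete gamma bound for `0 ≤ Re ω ≤ 1`, `χ ≥ 1`:
`|Γ(ω+1, χ)| ≤ 2 e^{-χ} χ^{Re ω + 1}`, where
`Γ(s, χ) = ∫_χ^∞ e^{-t} t^{s-1} dt` (so `Γ(ω+1,χ) = ∫_χ^∞ e^{-t} t^ω dt`). -/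
theorem upper_incomplete_gamma_bound_zeroone (χ : ℝ) (hχ : 1 ≤ χ) (ω : ℂ)
    (h₁ : 0 ≤ ω.re) (h₂ : ω.re ≤ 1) :
    ‖∫ t in Set.Ioi χ, Complex.exp (-(t : ℂ)) * (t : ℂ) ^ ω‖ ≤
      2 * Real.exp (-χ) * χ ^ (ω.re + 1) := by
  have hχ0 : (0:ℝ) < χ := by linarith
  have hsub : Set.Ioi χ ⊆ Set.Ioi (0:ℝ) := Set.Ioi_subset_Ioi (le_of_lt hχ0)
  -- integrability of norm bound t ↦ exp(-t) * t ^ ω.re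
  have hIntA : IntegrableOn (fun t : ℝ => Real.exp (-t) * t ^ ω.re) (Set.Ioi χ) := by
    have := (Real.GammaIntegral_convergent (s := ω.re + 1) (by linarith)).mono_set hsub
    simpa using this
  -- integrability of t ↦ exp(-t) * t
  have hIntB : IntegrableOn (fun t : ℝ => Real.exp (-t) * t) (Set.Ioi χ) := by
    have := (Real.GammaIntegral_convergent (s := 2) (by norm_num)).mono_set hsub
    simpa [show (2:ℝ)-1 = 1 by norm_num, Real.rpow_one] using this
  have hnorm : ∀ t ∈ Set.Ioi χ,
      ‖Complex.exp (-(t : ℂ)) * (t : ℂ) ^ ω‖ = Real.exp (-t) * t ^ ω.re := by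
    intro t ht
    have ht0 : (0:ℝ) < t := hχ0.trans ht
    rw [norm_mul, Complex.norm_exp,
      Complex.norm_cpow_eq_rpow_re_of_pos ht0]
    simp
  -- value of ∫ t in Ioi χ, exp(-t) * t
  have hval : ∫ t in Set.Ioi χ, Real.exp (-t) * t = (χ + 1) * Real.exp (-χ) := by
    have hderiv : ∀ x ∈ Set.Ici χ,
        HasDerivAt (fun t : ℝ => -(t + 1) * Real.exp (-t)) (Real.exp (-x) * x) x := by
      intro x _
      have h1 : HasDerivAt (fun t : ℝ => Real.exp (-t)) (-Real.exp (-x)) x := by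
        simpa using (hasDerivAt_neg x).exp
      have h2 : HasDerivAt (fun t : ℝ => -(t + 1)) (-1) x := by
        exact ((hasDerivAt_id x).add_const 1).neg
      have : HasDerivAt (fun t : ℝ => -(t + 1) * Real.exp (-t))
          (-1 * Real.exp (-x) + -(x + 1) * -Real.exp (-x)) x := h2.mul h1
      convert this using 1
      ring
    have htend : Filter.Tendsto (fun t : ℝ => -(t + 1) * Real.exp (-t)) Filter.atTop (nhds 0) := by
      have h0 : Filter.Tendsto (fun t : ℝ => t * Real.exp (-t)) Filter.atTop (nhds 0) := by
        simpa using Real.tendsto_pow_mul_exp_neg_atTop_nhds_zero 1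
      have h1 : Filter.Tendsto (fun t : ℝ => Real.exp (-t)) Filter.atTop (nhds 0) :=
        Real.tendsto_exp_neg_atTop_nhds_zero
      have := (h0.add h1).neg
      simp only [neg_add, neg_zero, add_zero] at this ⊢
      convert this using 2 with t
      ring
    have := integral_Ioi_of_hasDerivAt_of_tendsto' hderiv hIntB htend
    rw [this]
    ring
  calc ‖∫ t in Set.Ioi χ, Complex.exp (-(t : ℂ)) * (t : ℂ) ^ ω‖
      ≤ ∫ t in Set.Ioi χ, ‖Complex.exp (-(t : ℂ)) * (t : ℂ) ^ ω‖ :=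
        norm_integral_le_integral_norm _
    _ = ∫ t in Set.Ioi χ, Real.exp (-t) * t ^ ω.re :=
        setIntegral_congr_fun measurableSet_Ioi hnorm
    _ ≤ ∫ t in Set.Ioi χ, Real.exp (-t) * t := by
        refine setIntegral_mono_on hIntA hIntB measurableSet_Ioi ?_
        intro t ht
        have ht1 : (1:ℝ) ≤ t := le_trans hχ (le_of_lt ht)
        have : t ^ ω.re ≤ t ^ (1:ℝ) := Real.rpow_le_rpow_of_exponent_le ht1 h₂
        rw [Real.rpow_one] at this
        exact mul_le_mul_of_nonneg_left this (Real.exp_nonneg _)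
    _ = (χ + 1) * Real.exp (-χ) := hval
    _ ≤ 2 * Real.exp (-χ) * χ ^ (ω.re + 1) := by
        have h1 : χ + 1 ≤ 2 * χ := by linarith
        have h2 : χ ≤ χ ^ (ω.re + 1) := by
          nth_rewrite 1 [← Real.rpow_one χ]
          exact Real.rpow_le_rpow_of_exponent_le hχ (by linarith)
        nlinarith [Real.exp_nonneg (-χ), Real.exp_pos (-χ)]
end

section
/- For all real χ ≥ 1 and complex ω = a + ib with 1 ≤ a ≤ χ, the upper incomplete gamma function satisfies |Γ(ω+1, χ)| ≤ 2·e^{-χ}·χ^{a+1}. -/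
open MeasureTheory Set Filter Topology

/-- Upper incomplete gamma bound for `1 ≤ Re ω ≤ χ`, `χ ≥ 1`:
`|Γ(ω+1, χ)| ≤ 2 e^{-χ} χ^{Re ω + 1}`, where
`Γ(s, χ) = ∫_χ^∞ e^{-t} t^{s-1} dt` (so `Γ(ω+1,χ) = ∫_χ^∞ e^{-t} t^ω dt`). -/
theorem upper_incomplete_gamma_bound_large (χ : ℝ) (hχ : 1 ≤ χ) (ω : ℂ)
    (h₁ : 1 ≤ ω.re) (h₂ : ω.re ≤ χ) :
    ‖∫ t in Set.Ioi χ, Complex.exp (-(t : ℂ)) * (t : ℂ) ^ ω‖ ≤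
      2 * Real.exp (-χ) * χ ^ (ω.re + 1) := by
  set a := ω.re with ha
  have hχ0 : (0:ℝ) < χ := lt_of_lt_of_le one_pos hχ
  -- antiderivative of `t * exp (-(t-χ)/χ)`
  set F : ℝ → ℝ := fun t => -(χ * (t + χ) * Real.exp (-(t - χ)/χ)) with hF
  have hderiv : ∀ t ∈ Set.Ici χ, HasDerivAt F (t * Real.exp (-(t - χ)/χ)) t := by
    intro t _
    have h1 : HasDerivAt (fun t : ℝ => -(t - χ)/χ) (-1/χ) t :=
      ((hasDerivAt_id t).sub_const χ).neg.div_const χ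
    have h2 : HasDerivAt (fun t : ℝ => Real.exp (-(t - χ)/χ))
        (Real.exp (-(t - χ)/χ) * (-1/χ)) t := h1.exp
    have h3 : HasDerivAt (fun t : ℝ => χ * (t + χ)) χ t := by
      simpa using ((hasDerivAt_id t).add_const χ).const_mul χ
    have h4 := (h3.mul h2).neg
    exact h4.congr_deriv (by field_simp; ring)
  have hpos : ∀ t ∈ Set.Ioi χ, 0 ≤ t * Real.exp (-(t - χ)/χ) := by
    intro t ht
    have ht0 : 0 < t := lt_trans hχ0 ht
    positivity
  -- F tends to 0 at infinity
  have hb : (0:ℝ) < 1/χ := by positivity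
  have t1 := tendsto_rpow_mul_exp_neg_mul_atTop_nhds_zero 1 (1/χ) hb
  have t1' : Tendsto (fun t : ℝ => t * Real.exp (-(1/χ) * t)) atTop (𝓝 0) := by
    apply t1.congr'
    filter_upwards [eventually_gt_atTop (0:ℝ)] with t ht
    rw [Real.rpow_one]
  have t2 : Tendsto (fun t : ℝ => Real.exp (-(1/χ) * t)) atTop (𝓝 0) := by
    have hcomp : Tendsto (fun t : ℝ => (1/χ) * t) atTop atTop :=
      Tendsto.const_mul_atTop hb tendsto_id
    have h := Real.tendsto_exp_neg_atTop_nhds_zero.comp hcomp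
    apply h.congr
    intro t
    simp [Function.comp, neg_mul]
  have hFtend : Tendsto F atTop (𝓝 0) := by
    have hFeq : F = fun t => -((χ * Real.exp 1) * (t * Real.exp (-(1/χ) * t))
        + (χ^2 * Real.exp 1) * Real.exp (-(1/χ) * t)) := by
      funext t
      have hexp : Real.exp (-(t - χ)/χ) = Real.exp 1 * Real.exp (-(1/χ) * t) := by
        rw [← Real.exp_add]
        congr 1
        field_simp
        ring
      rw [hF]
      simp only [hexp]
      ring
    rw [hFeq]
    have := ((t1'.const_mul (χ * Real.exp 1)).add (t2.const_mul (χ^2 * Real.exp 1))).neg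
    simpa using this
  have hInt : IntegrableOn (fun t => t * Real.exp (-(t - χ)/χ)) (Set.Ioi χ) :=
    integrableOn_Ioi_deriv_of_nonneg' hderiv hpos hFtend
  have hval : ∫ t in Set.Ioi χ, t * Real.exp (-(t - χ)/χ) = 0 - F χ :=
    integral_Ioi_of_hasDerivAt_of_nonneg' hderiv hpos hFtend
  have hFχ : F χ = -(2 * χ^2) := by
    simp only [hF, sub_self, zero_div, neg_zero, Real.exp_zero, mul_one]
    ring
  -- the norm bound
  calc ‖∫ t in Set.Ioi χ, Complex.exp (-(t : ℂ)) * (t : ℂ) ^ ω‖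
      ≤ ∫ t in Set.Ioi χ, χ ^ (a - 1) * Real.exp (-χ) * (t * Real.exp (-(t - χ)/χ)) := by
        apply norm_integral_le_of_norm_le (hInt.const_mul _)
        filter_upwards [ae_restrict_mem measurableSet_Ioi] with t ht
        have ht0 : (0:ℝ) < t := lt_trans hχ0 ht
        have htχ : χ ≤ t := le_of_lt ht
        have hnorm : ‖Complex.exp (-(t : ℂ)) * (t : ℂ) ^ ω‖ = Real.exp (-t) * t ^ a := by
          rw [norm_mul, Complex.norm_exp,
            Complex.norm_cpow_eq_rpow_re_of_pos ht0]
          simp [ha]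
        rw [hnorm]
        -- key exponent inequality
        have hlog : Real.log t - Real.log χ ≤ (t - χ)/χ := by
          have h := Real.log_le_sub_one_of_pos (show 0 < t/χ by positivity)
          rw [Real.log_div (ne_of_gt ht0) (ne_of_gt hχ0)] at h
          have heq : t/χ - 1 = (t - χ)/χ := by field_simp
          linarith
        have hdiv : 0 ≤ (t - χ)/χ := by
          apply div_nonneg _ hχ0.le
          linarith
        have hstep : Real.log t * (a - 1) + -t ≤ Real.log χ * (a - 1) + -χ + -(t - χ)/χ := by
          have h9 : -(t - χ)/χ = -((t - χ)/χ) := by ring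
          rw [h9]
          have h3' : ((t - χ)/χ) * (χ - 1) = (t - χ) - (t - χ)/χ := by
            field_simp
          set d := (t - χ)/χ with hd
          have h1' : (Real.log t - Real.log χ) * (a - 1) ≤ d * (a - 1) :=
            mul_le_mul_of_nonneg_right hlog (by linarith)
          have h2' : d * (a - 1) ≤ d * (χ - 1) :=
            mul_le_mul_of_nonneg_left (by linarith) hdiv
          have h6' : (Real.log t - Real.log χ) * (a - 1)
              = Real.log t * (a - 1) - Real.log χ * (a - 1) := by ring
          linarith [h1', h2', h3', h6']
        have e1 : t ^ (a - 1) = Real.exp (Real.log t * (a - 1)) := Real.rpow_def_of_pos ht0 _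
        have e2 : χ ^ (a - 1) = Real.exp (Real.log χ * (a - 1)) := Real.rpow_def_of_pos hχ0 _
        have hmain : t ^ (a - 1) * Real.exp (-t)
            ≤ χ ^ (a - 1) * Real.exp (-χ) * Real.exp (-(t - χ)/χ) := by
          rw [e1, e2, ← Real.exp_add, ← Real.exp_add, ← Real.exp_add]
          apply Real.exp_le_exp.2
          linarith
        have e3 : t ^ a = t ^ (a - 1) * t := by
          conv_lhs => rw [show a = (a - 1) + 1 by ring]
          rw [Real.rpow_add ht0, Real.rpow_one]
        calc Real.exp (-t) * t ^ a = (t ^ (a - 1) * Real.exp (-t)) * t := by rw [e3]; ring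
          _ ≤ (χ ^ (a - 1) * Real.exp (-χ) * Real.exp (-(t - χ)/χ)) * t :=
              mul_le_mul_of_nonneg_right hmain ht0.le
          _ = χ ^ (a - 1) * Real.exp (-χ) * (t * Real.exp (-(t - χ)/χ)) := by ring
    _ = 2 * Real.exp (-χ) * χ ^ (a + 1) := by
        rw [integral_const_mul, hval, hFχ]
        have hc : χ ^ (a - 1) * χ ^ (2:ℕ) = χ ^ (a + 1) := by
          rw [← Real.rpow_natCast χ 2, ← Real.rpow_add hχ0]
          congr 1
          push_cast
          ring
        push_cast at hc
        linear_combination (2 * Real.exp (-χ)) * hc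
end

section
/- For all real χ ≥ 1 and complex ω = a + ib with -1 ≤ a ≤ χ, the upper incomplete gamma function satisfies |Γ(ω+1, χ)| ≤ 2·e^{-χ}·χ^{a+1}. -/
open MeasureTheory Set Filter Real

/-- The integral `∫_χ^∞ t e^{(χ-t)/χ} dt = 2χ²` (for `χ > 0`). -/
lemma aux_integral_eq (χ : ℝ) (hχ0 : 0 < χ) :
    ∫ t in Set.Ioi χ, t * Real.exp ((χ - t)/χ) = 2 * χ ^ 2 ∧
      MeasureTheory.IntegrableOn (fun t => t * Real.exp ((χ - t)/χ)) (Set.Ioi χ) := by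
  set F : ℝ → ℝ := fun t => -χ * (t + χ) * Real.exp ((χ - t)/χ) with hF
  have hderiv : ∀ t ∈ Set.Ici χ, HasDerivAt F (t * Real.exp ((χ - t)/χ)) t := by
    intro t ht
    have h1 : HasDerivAt (fun t : ℝ => (χ - t)/χ) (-1/χ) t := by
      simpa using ((hasDerivAt_id t).const_sub χ).div_const χ
    have h2 : HasDerivAt (fun t : ℝ => Real.exp ((χ - t)/χ))
        (Real.exp ((χ - t)/χ) * (-1/χ)) t := h1.exp
    have h3 : HasDerivAt (fun t : ℝ => -χ * (t + χ)) (-χ) t := by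
      simpa using ((hasDerivAt_id t).add_const χ).const_mul (-χ)
    have : HasDerivAt F _ t := h3.mul h2
    convert this using 1
    field_simp
    ring
  have htend : Filter.Tendsto F Filter.atTop (nhds 0) := by
    have hdiv : Filter.Tendsto (fun t : ℝ => t / χ) Filter.atTop Filter.atTop :=
      Filter.tendsto_id.atTop_div_const hχ0
    have key : Filter.Tendsto (fun u : ℝ => u * Real.exp (-u)) Filter.atTop (nhds 0) := by
      simpa using Real.tendsto_pow_mul_exp_neg_atTop_nhds_zero 1
    have key2 : Filter.Tendsto (fun u : ℝ => Real.exp (-u)) Filter.atTop (nhds 0) :=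
      Real.tendsto_exp_neg_atTop_nhds_zero
    have h := (((key.comp hdiv).const_mul χ).add ((key2.comp hdiv).const_mul χ)).const_mul
      (-χ * Real.exp 1)
    simp only [mul_zero, add_zero, zero_add] at h
    apply h.congr
    intro t
    have hexp : Real.exp ((χ - t)/χ) = Real.exp 1 * Real.exp (-(t/χ)) := by
      rw [← Real.exp_add]
      congr 1
      field_simp
      ring
    simp only [Function.comp, hF, hexp]
    field_simp
  have hpos : ∀ t ∈ Set.Ioi χ, 0 ≤ t * Real.exp ((χ - t)/χ) := by
    intro t ht
    exact mul_nonneg (le_of_lt (lt_of_lt_of_le hχ0 (le_of_lt ht))) (Real.exp_pos _).le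
  constructor
  · have := MeasureTheory.integral_Ioi_of_hasDerivAt_of_nonneg' hderiv hpos htend
    rw [this, hF]
    simp only [sub_self, zero_div, Real.exp_zero]
    ring
  · exact MeasureTheory.integrableOn_Ioi_deriv_of_nonneg' hderiv hpos htend

/-- Upper incomplete gamma bound for `-1 ≤ Re ω ≤ χ`, `χ ≥ 1`:
`|Γ(ω+1, χ)| ≤ 2 e^{-χ} χ^{Re ω + 1}`, where
`Γ(s, χ) = ∫_χ^∞ e^{-t} t^{s-1} dt` (so `Γ(ω+1,χ) = ∫_χ^∞ e^{-t} t^ω dt`). -/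
theorem upper_incomplete_gamma_bound_full (χ : ℝ) (hχ : 1 ≤ χ) (ω : ℂ)
    (h₁ : -1 ≤ ω.re) (h₂ : ω.re ≤ χ) :
    ‖∫ t in Set.Ioi χ, Complex.exp (-(t : ℂ)) * (t : ℂ) ^ ω‖ ≤
      2 * Real.exp (-χ) * χ ^ (ω.re + 1) := by
  have hχ0 : (0:ℝ) < χ := lt_of_lt_of_le one_pos hχ
  set a := ω.re with ha
  obtain ⟨hval, hint⟩ := aux_integral_eq χ hχ0
  set C : ℝ := Real.exp (-χ) * χ ^ a / χ with hC
  set g : ℝ → ℝ := fun t => C * (t * Real.exp ((χ - t)/χ)) with hg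
  have hgint : MeasureTheory.Integrable g
      (MeasureTheory.volume.restrict (Set.Ioi χ)) := hint.const_mul C
  have hgval : ∫ t in Set.Ioi χ, g t = 2 * Real.exp (-χ) * χ ^ (a + 1) := by
    rw [hg]
    rw [MeasureTheory.integral_const_mul, hval, hC, Real.rpow_add_one (ne_of_gt hχ0)]
    field_simp
  have hbound : ∀ t ∈ Set.Ioi χ, ‖Complex.exp (-(t:ℂ)) * (t:ℂ) ^ ω‖ ≤ g t := by
    intro t ht
    have htχ : χ < t := ht
    have ht0 : (0:ℝ) < t := lt_of_lt_of_le hχ0 htχ.le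
    have hnorm : ‖Complex.exp (-(t:ℂ)) * (t:ℂ) ^ ω‖ = Real.exp (-t) * t ^ a := by
      rw [norm_mul, Complex.norm_exp,
        Complex.norm_cpow_eq_rpow_re_of_pos ht0]
      simp [ha]
    rw [hnorm]
    have hLt : Real.log t - Real.log χ ≤ (t - χ)/χ := by
      have h1 : Real.log (t/χ) ≤ t/χ - 1 := Real.log_le_sub_one_of_pos (div_pos ht0 hχ0)
      rw [Real.log_div (ne_of_gt ht0) (ne_of_gt hχ0)] at h1
      have : t/χ - 1 = (t - χ)/χ := by field_simp
      linarith [this ▸ h1]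
    have hL0 : 0 ≤ Real.log t - Real.log χ :=
      sub_nonneg.2 (Real.log_le_log hχ0 htχ.le)
    -- rewrite both sides as exponentials
    have hLHS : Real.exp (-t) * t ^ a = Real.exp (-t + a * Real.log t) := by
      rw [Real.rpow_def_of_pos ht0, ← Real.exp_add]
      ring_nf
    have hRHS : g t = Real.exp (-χ + a * Real.log χ - Real.log χ + Real.log t
        + (χ - t)/χ) := by
      rw [hg, hC, Real.rpow_def_of_pos hχ0]
      rw [show -χ + a * Real.log χ - Real.log χ + Real.log t + (χ - t)/χ
          = (-χ + a * Real.log χ) + (- Real.log χ) + Real.log t + (χ - t)/χ by ring]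
      rw [Real.exp_add, Real.exp_add, Real.exp_add, ← Real.exp_add, Real.exp_neg,
        Real.exp_log ht0]
      field_simp [Real.exp_log hχ0]
      rw [Real.exp_log hχ0]
    rw [hLHS, hRHS, Real.exp_le_exp]
    have hkey : (a - 1) * (Real.log t - Real.log χ) ≤ (t - χ) * (χ - 1) / χ := by
      have h1 : (χ - a) * (Real.log t - Real.log χ) ≥ 0 :=
        mul_nonneg (by linarith) hL0
      have h2 : (χ - 1) * (Real.log t - Real.log χ) ≤ (χ - 1) * ((t - χ)/χ) :=
        mul_le_mul_of_nonneg_left hLt (by linarith)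
      have h3 : (a - 1) * (Real.log t - Real.log χ)
          = (χ - 1) * (Real.log t - Real.log χ) - (χ - a) * (Real.log t - Real.log χ) := by ring
      have h4 : (χ - 1) * ((t - χ)/χ) = (t - χ) * (χ - 1) / χ := by ring
      linarith
    have hdiv : (χ - t)/χ = -((t - χ) * 1 / χ) := by field_simp; ring
    have hdiv2 : (t - χ) * (χ - 1)/χ = (t - χ) * χ / χ - (t - χ) * 1 / χ := by
      field_simp
    have hχχ : (t - χ) * χ / χ = t - χ := by field_simp
    rw [hdiv]
    linarith [hdiv2 ▸ hkey, hχχ]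
  calc ‖∫ t in Set.Ioi χ, Complex.exp (-(t:ℂ)) * (t:ℂ) ^ ω‖
      ≤ ∫ t in Set.Ioi χ, g t := by
        apply MeasureTheory.norm_integral_le_of_norm_le hgint
        filter_upwards [MeasureTheory.ae_restrict_mem measurableSet_Ioi] with t ht
        exact hbound t ht
    _ = 2 * Real.exp (-χ) * χ ^ (a + 1) := hgval
end
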